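/- Let p₀/q₀ = a/b be a reduced fraction with a ∈ ℤ, b ∈ ℕ, b ≤ x for some real x > 0. Then the jump of the function B_x at a/b satisfies B_x⁺(a/b) - B_x⁻(a/b) = -(1/x)·⌊x/b⌋, where B_x(t) = (1/x)·Σ_{1 ≤ k ≤ ⌊x⌋} β(kt), β(t) = t - ⌊t⌋ - 1/2, and B_x^± denote one-sided limits. -/

import Mathlib

noncomputable def beta (t : ℝ) : ℝ := t - ⌊t⌋ - 1/2

noncomputable def B (x : ℝ) (t : ℝ) : ℝ :=
  (1/x) * ∑ k ∈ Finset.Icc 1 ⌊x⌋₊, beta (k * t)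

open Filter Topology Set

lemma tendsto_beta_right (k : ℝ) (hk : 0 < k) (s : ℝ) :
    Tendsto (fun t => beta (k*t)) (𝓝[>] s) (𝓝 (beta (k*s))) := by
  have h1 : Tendsto (fun t : ℝ => k*t - (⌊k*s⌋ : ℝ) - 1/2) (𝓝[>] s) (𝓝 (beta (k*s))) := by
    have : Tendsto (fun t : ℝ => k*t - (⌊k*s⌋ : ℝ) - 1/2) (𝓝 s) (𝓝 (k*s - (⌊k*s⌋:ℝ) - 1/2)) := by
      exact ((((continuous_const.mul continuous_id).sub continuous_const).sub continuous_const).tendsto s)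
    exact this.mono_left nhdsWithin_le_nhds
  refine h1.congr' ?_
  have hlt : s < ((⌊k*s⌋ : ℝ) + 1)/k := by
    rw [lt_div_iff₀ hk]
    rw [mul_comm]
    exact Int.lt_floor_add_one _
  filter_upwards [Ioo_mem_nhdsGT_of_mem (Set.mem_Ico.mpr ⟨le_refl s, hlt⟩)] with t ht
  have h2 : ⌊k*t⌋ = ⌊k*s⌋ := by
    rw [Int.floor_eq_iff]
    constructor
    · calc (⌊k*s⌋ : ℝ) ≤ k*s := Int.floor_le _
        _ ≤ k*t := by nlinarith [ht.1]
    · have := ht.2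
      calc k*t < k*(((⌊k*s⌋ : ℝ) + 1)/k) := by nlinarith
        _ = (⌊k*s⌋ : ℝ) + 1 := by field_simp
  simp [beta, h2]

lemma tendsto_beta_left_int (k : ℝ) (hk : 0 < k) (s : ℝ) (m : ℤ) (hm : k*s = m) :
    Tendsto (fun t => beta (k*t)) (𝓝[<] s) (𝓝 (beta (k*s) + 1)) := by
  have hval : beta (k*s) + 1 = k*s - ((m-1 : ℤ) : ℝ) - 1/2 := by
    have : ⌊k*s⌋ = m := by rw [hm]; exact Int.floor_intCast m
    simp [beta, this, hm]; push_cast; ring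
  have h1 : Tendsto (fun t : ℝ => k*t - ((m-1:ℤ) : ℝ) - 1/2) (𝓝[<] s) (𝓝 (beta (k*s) + 1)) := by
    rw [hval]
    have : Tendsto (fun t : ℝ => k*t - ((m-1:ℤ) : ℝ) - 1/2) (𝓝 s) (𝓝 (k*s - ((m-1:ℤ):ℝ) - 1/2)) := by
      exact ((((continuous_const.mul continuous_id).sub continuous_const).sub continuous_const).tendsto s)
    exact this.mono_left nhdsWithin_le_nhds
  refine h1.congr' ?_
  have hlt : ((m : ℝ) - 1)/k < s := by
    rw [div_lt_iff₀ hk, mul_comm, hm]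
    linarith
  filter_upwards [Ioo_mem_nhdsLT_of_mem (Set.mem_Ioc.mpr ⟨hlt, le_refl s⟩)] with t ht
  have h2 : ⌊k*t⌋ = m - 1 := by
    rw [Int.floor_eq_iff]
    constructor
    · push_cast
      calc (m : ℝ) - 1 = k * (((m:ℝ)-1)/k) := by field_simp
        _ ≤ k * t := by nlinarith [ht.1]
    · push_cast
      have : k * t < k * s := by nlinarith [ht.2]
      rw [hm] at this; linarith
  simp only [beta, h2]
  try push_cast
  try ring

lemma tendsto_beta_left_nonint (k : ℝ) (hk : 0 < k) (s : ℝ) (hm : ((⌊k*s⌋ : ℝ)) ≠ k*s) :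
    Tendsto (fun t => beta (k*t)) (𝓝[<] s) (𝓝 (beta (k*s))) := by
  have h1 : Tendsto (fun t : ℝ => k*t - (⌊k*s⌋ : ℝ) - 1/2) (𝓝[<] s) (𝓝 (beta (k*s))) := by
    have : Tendsto (fun t : ℝ => k*t - (⌊k*s⌋ : ℝ) - 1/2) (𝓝 s) (𝓝 (k*s - (⌊k*s⌋:ℝ) - 1/2)) := by
      exact ((((continuous_const.mul continuous_id).sub continuous_const).sub continuous_const).tendsto s)
    exact this.mono_left nhdsWithin_le_nhds
  refine h1.congr' ?_
  have hfl : (⌊k*s⌋ : ℝ) < k*s := lt_of_le_of_ne (Int.floor_le _) hm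
  have hlt : (⌊k*s⌋ : ℝ)/k < s := by rw [div_lt_iff₀ hk]; linarith [hfl]
  filter_upwards [Ioo_mem_nhdsLT_of_mem (Set.mem_Ioc.mpr ⟨hlt, le_refl s⟩)] with t ht
  have h2 : ⌊k*t⌋ = ⌊k*s⌋ := by
    rw [Int.floor_eq_iff]
    constructor
    · calc (⌊k*s⌋ : ℝ) = k * ((⌊k*s⌋:ℝ)/k) := by field_simp
        _ ≤ k * t := by nlinarith [ht.1]
    · have : k*t < k*s := by nlinarith [ht.2]
      calc k*t < k*s := this
        _ < (⌊k*s⌋ : ℝ) + 1 := Int.lt_floor_add_one _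
  simp [beta, h2]

theorem stmt_7 (a : ℤ) (b : ℕ) (hb : 1 ≤ b) (hab : Int.gcd a b = 1)
    (x : ℝ) (hbx : (b : ℝ) ≤ x)
    (Lp Lm : ℝ)
    (hLp : Filter.Tendsto (fun t => B x t)
      (nhdsWithin ((a : ℝ)/b) (Set.Ioi ((a : ℝ)/b))) (nhds Lp))
    (hLm : Filter.Tendsto (fun t => B x t)
      (nhdsWithin ((a : ℝ)/b) (Set.Iio ((a : ℝ)/b))) (nhds Lm)) :
    Lp - Lm = -(1/x) * ⌊x / b⌋₊ := by
  have hb0 : (0 : ℝ) < b := by exact_mod_cast hb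
  have hx : (0:ℝ) < x := lt_of_lt_of_le hb0 hbx
  set s : ℝ := (a : ℝ)/b with hs
  set n := ⌊x⌋₊ with hn
  -- characterize integrality of k*s
  have hint : ∀ k : ℕ, b ∣ k → ∃ m : ℤ, (k:ℝ) * s = m := by
    intro k ⟨j, hj⟩
    refine ⟨j * a, ?_⟩
    subst hj
    have hbne : ((b:ℕ):ℝ) ≠ 0 := by positivity
    push_cast
    rw [mul_comm ((b:ℕ):ℝ) (j:ℝ), mul_assoc, mul_div_cancel₀ _ hbne]
  have hnonint : ∀ k : ℕ, ¬ b ∣ k → ((⌊(k:ℝ)*s⌋ : ℝ)) ≠ (k:ℝ)*s := by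
    intro k hk heq
    apply hk
    set m := ⌊(k:ℝ)*s⌋ with hm
    have : (k:ℝ) * (a:ℝ) = (m:ℝ) * b := by
      rw [hs] at heq
      field_simp at heq
      linarith [heq]
    have hZ : (k:ℤ) * a = m * b := by exact_mod_cast this
    have hdvd : (b:ℤ) ∣ (k:ℤ) * a := ⟨m, by linarith [hZ]⟩
    have hco : IsCoprime (b:ℤ) a := by
      rw [Int.isCoprime_iff_gcd_eq_one, Int.gcd_comm]
      exact hab
    have : (b:ℤ) ∣ (k:ℤ) := (hco.dvd_of_dvd_mul_right) hdvd
    exact_mod_cast this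
  -- limits
  have hkpos : ∀ k ∈ Finset.Icc 1 n, (0:ℝ) < (k:ℝ) := by
    intro k hk
    have := (Finset.mem_Icc.mp hk).1
    exact_mod_cast Nat.lt_of_lt_of_le Nat.zero_lt_one this
  have hP : Tendsto (fun t => B x t) (𝓝[>] s) (𝓝 ((1/x) * ∑ k ∈ Finset.Icc 1 n, beta (k * s))) := by
    unfold B
    apply Tendsto.const_mul
    apply tendsto_finset_sum
    intro k hk
    exact tendsto_beta_right k (hkpos k hk) s
  have hM : Tendsto (fun t => B x t) (𝓝[<] s)
      (𝓝 ((1/x) * ∑ k ∈ Finset.Icc 1 n, (beta (k * s) + if b ∣ k then (1:ℝ) else 0))) := by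
    unfold B
    apply Tendsto.const_mul
    apply tendsto_finset_sum
    intro k hk
    by_cases hd : b ∣ k
    · obtain ⟨m, hm⟩ := hint k hd
      simpa [hd] using tendsto_beta_left_int k (hkpos k hk) s m hm
    · simpa [hd] using tendsto_beta_left_nonint k (hkpos k hk) s (hnonint k hd)
  have hLp' : Lp = (1/x) * ∑ k ∈ Finset.Icc 1 n, beta (k * s) :=
    tendsto_nhds_unique hLp hP
  have hLm' : Lm = (1/x) * ∑ k ∈ Finset.Icc 1 n, (beta (k * s) + if b ∣ k then (1:ℝ) else 0) :=
    tendsto_nhds_unique hLm hM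
  have hcount : ∑ k ∈ Finset.Icc 1 n, (if b ∣ k then (1:ℝ) else 0) = ((n / b : ℕ) : ℝ) := by
    rw [← Finset.sum_filter]
    simp only [Finset.sum_const, nsmul_eq_mul, mul_one]
    norm_cast
    have : Finset.Icc 1 n = Finset.Ioc 0 n := rfl
    rw [this]
    exact Nat.Ioc_filter_dvd_card_eq_div n b
  have hfloor : ⌊x / b⌋₊ = n / b := Nat.floor_div_natCast x b
  rw [hLp', hLm', hfloor, Finset.sum_add_distrib, hcount]
  ring
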